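/- With the representation as above, the mixed relations hold: [u⁺, v⁻] = η t⁻, [u⁻, v⁺] = −η t⁺, [t⁺, v⁻] = η u⁻, [t⁻, v⁺] = −η u⁺, and [u^±, v^±] = [t^±, v^±] = 0. -/

import Mathlib

/-- The auxiliary space: (coefficient functions of) formal combinations of
basis vectors `|j,k,l⟩`, `j,k,l ∈ ℤ≥0`. -/
abbrev Aux := (ℕ × ℕ × ℕ) → ℂ

/-- A weighted-shift operator on the auxiliary space:
`(shiftOp σ w f) p = w p * f (σ p)`. -/
noncomputable def shiftOp (σ : ℕ × ℕ × ℕ → ℕ × ℕ × ℕ) (w : ℕ × ℕ × ℕ → ℂ) :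
    Module.End ℂ Aux where
  toFun f := fun p => w p * f (σ p)
  map_add' f g := by funext p; simp [mul_add]
  map_smul' c f := by funext p; simp [smul_eq_mul]; ring

/-- Bosonic annihilation operator `b↑`: `b↑|j,k,l⟩ = √j |j−1,k,l⟩`. -/
noncomputable def bUp : Module.End ℂ Aux :=
  shiftOp (fun p => (p.1 + 1, p.2.1, p.2.2)) (fun p => (Real.sqrt (p.1 + 1) : ℂ))

/-- Bosonic creation operator `b↑†`: `b↑†|j,k,l⟩ = √(j+1) |j+1,k,l⟩`. -/
noncomputable def bUpDag : Module.End ℂ Aux :=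
  shiftOp (fun p => (p.1 - 1, p.2.1, p.2.2)) (fun p => (Real.sqrt p.1 : ℂ))

/-- Bosonic annihilation operator `b↓`. -/
noncomputable def bDown : Module.End ℂ Aux :=
  shiftOp (fun p => (p.1, p.2.1 + 1, p.2.2)) (fun p => (Real.sqrt (p.2.1 + 1) : ℂ))

/-- Bosonic creation operator `b↓†`. -/
noncomputable def bDownDag : Module.End ℂ Aux :=
  shiftOp (fun p => (p.1, p.2.1 - 1, p.2.2)) (fun p => (Real.sqrt p.2.1 : ℂ))

/-- Complex-spin raising operator: `s⁺|j,k,l⟩ = l |j,k,l−1⟩`. -/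
noncomputable def sPlus : Module.End ℂ Aux :=
  shiftOp (fun p => (p.1, p.2.1, p.2.2 + 1)) (fun p => ((p.2.2 : ℂ) + 1))

/-- Complex-spin lowering operator with parameter `pp`:
`s⁻|j,k,l⟩ = (2p−l) |j,k,l+1⟩`. -/
noncomputable def sMinus (pp : ℂ) : Module.End ℂ Aux :=
  shiftOp (fun p => (p.1, p.2.1, p.2.2 - 1))
    (fun p => if p.2.2 = 0 then 0 else 2 * pp - ((p.2.2 - 1 : ℕ) : ℂ))

/-- Complex-spin `z`-operator: `s^z|j,k,l⟩ = (p−l) |j,k,l⟩`. -/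
noncomputable def sZ (pp : ℂ) : Module.End ℂ Aux :=
  shiftOp id (fun p => pp - (p.2.2 : ℂ))

/-- `t⁺ = b↑`. -/
noncomputable def tP : Module.End ℂ Aux := bUp
/-- `t⁻ = η b↑†`. -/
noncomputable def tM (η : ℂ) : Module.End ℂ Aux := η • bUpDag
/-- `u⁺ = η b↓`. -/
noncomputable def uP (η : ℂ) : Module.End ℂ Aux := η • bDown
/-- `u⁻ = b↓†`. -/
noncomputable def uM : Module.End ℂ Aux := bDownDag
/-- `v⁺ = η (b↑ b↓ + s⁺)`. -/
noncomputable def vP (η : ℂ) : Module.End ℂ Aux := η • (bUp * bDown + sPlus)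
/-- `v⁻ = η (b↑† b↓† − s⁻)`. -/
noncomputable def vM (η pp : ℂ) : Module.End ℂ Aux := η • (bUpDag * bDownDag - sMinus pp)
/-- `l↑ = η (b↑† b↑ + 1/2 − s^z)`. -/
noncomputable def lUp (η pp : ℂ) : Module.End ℂ Aux :=
  η • (bUpDag * bUp + (1 / 2 : ℂ) • (1 : Module.End ℂ Aux) - sZ pp)
/-- `l↓ = η (b↓† b↓ + 1/2 − s^z)`. -/
noncomputable def lDown (η pp : ℂ) : Module.End ℂ Aux :=
  η • (bDownDag * bDown + (1 / 2 : ℂ) • (1 : Module.End ℂ Aux) - sZ pp)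


private lemma csq_one : ((Real.sqrt 1 : ℝ) : ℂ) = 1 := by simp

private lemma csq1 (n : ℕ) : ((Real.sqrt (1 + (n : ℝ)) : ℝ) : ℂ) ^ 2 = 1 + (n : ℂ) := by
  rw [← Complex.ofReal_pow, Real.sq_sqrt (by positivity)]; push_cast; ring

private lemma csq2 (n : ℕ) : ((Real.sqrt (2 + (n : ℝ)) : ℝ) : ℂ) ^ 2 = 2 + (n : ℂ) := by
  rw [← Complex.ofReal_pow, Real.sq_sqrt (by positivity)]; push_cast; ring

set_option linter.unusedTactic false in
set_option maxHeartbeats 1000000 in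
/-- Mixed relations: `[u⁺, v⁻] = η t⁻`, `[u⁻, v⁺] = −η t⁺`, `[t⁺, v⁻] = η u⁻`,
`[t⁻, v⁺] = −η u⁺`, and `[u^±, v^±] = [t^±, v^±] = 0`. -/
theorem mixed_relations (η pp : ℂ) :
    uP η * vM η pp - vM η pp * uP η = η • tM η ∧
    uM * vP η - vP η * uM = -η • tP ∧
    tP * vM η pp - vM η pp * tP = η • uM ∧
    tM η * vP η - vP η * tM η = -η • uP η ∧
    uP η * vP η - vP η * uP η = 0 ∧
    uM * vM η pp - vM η pp * uM = 0 ∧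
    tP * vP η - vP η * tP = 0 ∧
    tM η * vM η pp - vM η pp * tM η = 0 := by
  refine ⟨?_, ?_, ?_, ?_, ?_, ?_, ?_, ?_⟩ <;>
  · apply LinearMap.ext; intro f; funext q
    obtain ⟨j,k,l⟩ := q
    simp only [uP, uM, tP, tM, vP, vM, bUp, bUpDag, bDown, bDownDag, sPlus, sMinus, shiftOp,
      Module.End.mul_apply, LinearMap.smul_apply, LinearMap.sub_apply, LinearMap.add_apply,
      LinearMap.coe_mk, AddHom.coe_mk, LinearMap.zero_apply, Pi.smul_apply, Pi.sub_apply,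
      Pi.add_apply, Pi.zero_apply, smul_eq_mul, LinearMap.neg_apply, Pi.neg_apply, neg_smul]
    rcases j with _|j <;> rcases k with _|k <;> rcases l with _|l <;>
      simp only [Nat.add_sub_cancel, Nat.sub_zero, if_true, if_false, Nat.succ_ne_zero,
        Nat.zero_sub, Nat.cast_zero, Real.sqrt_zero, Complex.ofReal_zero, ite_true, ite_false,
        reduceIte, zero_mul, mul_zero, zero_sub, sub_zero, add_zero, zero_add, neg_zero,
        Nat.cast_ofNat, Nat.cast_succ, Nat.cast_add, Nat.cast_one] <;>
      ring_nf <;>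
      simp -failIfUnchanged only [csq_one, csq1, csq2] <;>
      push_cast <;> ring
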